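/- Let ζ₁ + ζ₂ + ζ₃ = 0 with ζᵢ = (ξᵢ, qᵢ), all ξᵢ ≠ 0, and let Ω := ω(ζ₁) + ω(ζ₂) + ω(ζ₃) with ω(ξ,q) = ξ³ + q²/ξ. Then the partial derivative of Ω with respect to q₁ (holding ξ₁, ξ₂, ξ = ξ₁+ξ₂, q fixed, with q₂ = q − q₁) satisfies |∂Ω/∂q₁| = 2|q₁/ξ₁ − (q−q₁)/(ξ−ξ₁)| and moreover |∂Ω/∂q₁|² = 4·(ξ/(ξ₁(ξ−ξ₁)))·(Ω + 3ξ₁(ξ−ξ₁)ξ) whenever the right-hand side is nonnegative. -/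

import Mathlib

/-- With `ω(ξ,q) = ξ³ + q²/ξ` and `Ω = ω(ξ₁,q₁) + ω(ξ−ξ₁,q−q₁) + ω(−ξ,−q)` viewed as a
function of `q₁`, its derivative satisfies `∂Ω/∂q₁ = 2(q₁/ξ₁ − (q−q₁)/(ξ−ξ₁))`, hence
`|∂Ω/∂q₁| = 2|q₁/ξ₁ − (q−q₁)/(ξ−ξ₁)|`, and moreover
`|∂Ω/∂q₁|² = 4·(ξ/(ξ₁(ξ−ξ₁)))·(Ω + 3ξ₁(ξ−ξ₁)ξ)`. -/
theorem stmt_8 (ξ₁ ξ q q₁ : ℝ) (h1 : ξ₁ ≠ 0) (h2 : ξ - ξ₁ ≠ 0) (h3 : ξ ≠ 0) :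
    HasDerivAt (fun s : ℝ => (ξ₁ ^ 3 + s ^ 2 / ξ₁) + ((ξ - ξ₁) ^ 3 + (q - s) ^ 2 / (ξ - ξ₁))
        + ((-ξ) ^ 3 + (-q) ^ 2 / (-ξ)))
      (2 * (q₁ / ξ₁ - (q - q₁) / (ξ - ξ₁))) q₁
    ∧ |2 * (q₁ / ξ₁ - (q - q₁) / (ξ - ξ₁))| = 2 * |q₁ / ξ₁ - (q - q₁) / (ξ - ξ₁)|
    ∧ (2 * (q₁ / ξ₁ - (q - q₁) / (ξ - ξ₁))) ^ 2
        = 4 * (ξ / (ξ₁ * (ξ - ξ₁))) *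
            (((ξ₁ ^ 3 + q₁ ^ 2 / ξ₁) + ((ξ - ξ₁) ^ 3 + (q - q₁) ^ 2 / (ξ - ξ₁))
              + ((-ξ) ^ 3 + (-q) ^ 2 / (-ξ))) + 3 * ξ₁ * (ξ - ξ₁) * ξ) := by
  have key : (-q) ^ 2 / (-ξ) = -(q ^ 2 / ξ) := by rw [div_neg, neg_sq]
  refine ⟨?_, by rw [abs_mul]; norm_num, ?_⟩
  · have hA : HasDerivAt (fun s : ℝ => ξ₁ ^ 3 + s ^ 2 / ξ₁) (q₁ * 2 / ξ₁) q₁ := by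
      have : HasDerivAt (fun s : ℝ => s ^ 2) (2 * q₁ ^ 1) q₁ := by
        simpa using (hasDerivAt_pow 2 q₁)
      simpa [mul_comm] using (this.div_const ξ₁).const_add (ξ₁ ^ 3)
    have hB : HasDerivAt (fun s : ℝ => (ξ - ξ₁) ^ 3 + (q - s) ^ 2 / (ξ - ξ₁))
        (-((q - q₁) * 2) / (ξ - ξ₁)) q₁ := by
      have h : HasDerivAt (fun s : ℝ => q - s) (0 - 1) q₁ :=
        (hasDerivAt_const _ q).sub (hasDerivAt_id q₁)
      have := ((h.pow 2).div_const (ξ - ξ₁)).const_add ((ξ - ξ₁) ^ 3)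
      simpa [mul_comm, mul_assoc, mul_left_comm] using this
    have := (hA.add hB).add_const ((-ξ) ^ 3 + (-q) ^ 2 / (-ξ))
    exact this.congr_deriv (by ring)
  · rw [key]
    field_simp
    ring
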